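/- Fix m ≥ 3 and let (A_i)_{i∈ℕ} be i.i.d. uniform random vectors on S^{m-1}, with A^{[n]} the n×m matrix of the first n of them. Then with probability one, 𝒞(A^{[n]}) → 1 as n → ∞. -/

import Mathlib

open Real Set MeasureTheory ProbabilityTheory Filter
open scoped RealInnerProductSpace ENNReal

noncomputable def thetaA {m n : ℕ} (a : Fin n → EuclideanSpace ℝ (Fin m)) : ℝ :=
  ⨆ x : {x : EuclideanSpace ℝ (Fin m) // x ≠ 0},
    ⨅ i, Real.arccos (⟪a i, (x : EuclideanSpace ℝ (Fin m))⟫ /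
      ‖(x : EuclideanSpace ℝ (Fin m))‖)

noncomputable def condNum {m n : ℕ} (a : Fin n → EuclideanSpace ℝ (Fin m)) : ℝ :=
  |Real.cos (thetaA a)|⁻¹

def IsUniformOnSphere {m : ℕ} (μ : Measure (EuclideanSpace ℝ (Fin m))) : Prop :=
  IsProbabilityMeasure μ ∧ μ (Metric.sphere (0 : EuclideanSpace ℝ (Fin m)) 1)ᶜ = 0 ∧
    ∀ L : EuclideanSpace ℝ (Fin m) ≃ₗᵢ[ℝ] EuclideanSpace ℝ (Fin m), μ.map L = μ

/-! ### Auxiliary lemmas -/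

lemma SBC.cover_and_pos {m : ℕ} (hm : 1 ≤ m) {ε : ℝ} (hε : 0 < ε) :
    ∃ T : Finset (EuclideanSpace ℝ (Fin m)),
      (Metric.sphere (0 : EuclideanSpace ℝ (Fin m)) 1 ⊆ ⋃ c ∈ T, Metric.ball c ε) ∧
      (∀ c ∈ T, ‖c‖ = 1) ∧
      ∀ μ : Measure (EuclideanSpace ℝ (Fin m)), IsUniformOnSphere μ →
        ∀ c : EuclideanSpace ℝ (Fin m), ‖c‖ = 1 →
          ((T.card : ℝ≥0∞))⁻¹ ≤ μ (Metric.ball c ε) := by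
  classical
  set E := EuclideanSpace ℝ (Fin m)
  obtain ⟨t, ht⟩ := (isCompact_sphere (0 : E) 1).elim_finite_subcover
    (fun c : Metric.sphere (0 : E) 1 => Metric.ball (c : E) ε)
    (fun _ => Metric.isOpen_ball)
    (fun x hx => Set.mem_iUnion.2 ⟨⟨x, hx⟩, Metric.mem_ball_self hε⟩)
  refine ⟨t.image Subtype.val, ?_, ?_, ?_⟩
  · intro x hx
    obtain ⟨c, hc, hxc⟩ := Set.mem_iUnion₂.1 (ht hx)
    exact Set.mem_iUnion₂.2 ⟨c, Finset.mem_image_of_mem _ hc, hxc⟩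
  · intro c hc
    obtain ⟨c', _, rfl⟩ := Finset.mem_image.1 hc
    simpa [mem_sphere_zero_iff_norm] using c'.2
  · intro μ hμ c hc
    set T := t.image (Subtype.val : Metric.sphere (0 : E) 1 → E) with hT
    haveI : IsProbabilityMeasure μ := hμ.1
    have key : ∀ c' : E, ‖c'‖ = 1 → μ (Metric.ball c' ε) = μ (Metric.ball c ε) := by
      intro c' hc'
      set L : E ≃ₗᵢ[ℝ] E := (Submodule.reflection (ℝ ∙ (c - c'))ᗮ)
      have hLc : L c = c' := Submodule.reflection_sub (by rw [hc, hc'])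
      have hpre : (L : E → E) ⁻¹' Metric.ball c' ε = Metric.ball c ε := by
        ext x
        simp only [Set.mem_preimage, Metric.mem_ball]
        rw [← hLc, ← L.toIsometryEquiv.dist_eq x c]
        rfl
      calc μ (Metric.ball c' ε) = (μ.map L) (Metric.ball c' ε) := by rw [hμ.2.2 L]
        _ = μ ((L : E → E) ⁻¹' Metric.ball c' ε) :=
            Measure.map_apply L.continuous.measurable measurableSet_ball
        _ = μ (Metric.ball c ε) := by rw [hpre]
    have hsph : μ (Metric.sphere (0 : E) 1) = 1 := by
      have h := measure_add_measure_compl (μ := μ) (s := Metric.sphere (0:E) 1)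
        (Metric.isClosed_sphere.measurableSet)
      rw [hμ.2.1, add_zero] at h
      simpa using h
    have hmem : EuclideanSpace.single (⟨0, by omega⟩ : Fin m) (1 : ℝ)
        ∈ Metric.sphere (0 : E) 1 := by
      simp [mem_sphere_zero_iff_norm, EuclideanSpace.norm_single]
    have hTne : T.Nonempty := by
      obtain ⟨c', hc', _⟩ := Set.mem_iUnion₂.1
        ((show Metric.sphere (0:E) 1 ⊆ ⋃ c'' ∈ T, Metric.ball c'' ε by
          intro x hx
          obtain ⟨cc, hcc, hxc⟩ := Set.mem_iUnion₂.1 (ht hx)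
          exact Set.mem_iUnion₂.2 ⟨cc, Finset.mem_image_of_mem _ hcc, hxc⟩) hmem)
      exact ⟨c', hc'⟩
    have hcard0 : (T.card : ℝ≥0∞) ≠ 0 := by
      simp [Finset.card_ne_zero_of_mem hTne.choose_spec]
    have hchain : (1 : ℝ≥0∞) ≤ T.card * μ (Metric.ball c ε) := by
      calc (1 : ℝ≥0∞) = μ (Metric.sphere (0 : E) 1) := hsph.symm
        _ ≤ μ (⋃ c' ∈ T, Metric.ball c' ε) := by
            apply measure_mono
            intro x hx
            obtain ⟨cc, hcc, hxc⟩ := Set.mem_iUnion₂.1 (ht hx)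
            exact Set.mem_iUnion₂.2 ⟨cc, Finset.mem_image_of_mem _ hcc, hxc⟩
        _ ≤ ∑ c' ∈ T, μ (Metric.ball c' ε) := measure_biUnion_finset_le _ _
        _ = ∑ c' ∈ T, μ (Metric.ball c ε) := by
            apply Finset.sum_congr rfl
            intro c' hc'
            apply key
            obtain ⟨cc, _, rfl⟩ := Finset.mem_image.1 hc'
            simpa [mem_sphere_zero_iff_norm] using cc.2
        _ = T.card * μ (Metric.ball c ε) := by
            rw [Finset.sum_const, nsmul_eq_mul]
    calc ((T.card : ℝ≥0∞))⁻¹ = (T.card : ℝ≥0∞)⁻¹ * 1 := (mul_one _).symm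
      _ ≤ (T.card : ℝ≥0∞)⁻¹ * (T.card * μ (Metric.ball c ε)) :=
          mul_le_mul_right hchain _
      _ = ((T.card : ℝ≥0∞)⁻¹ * T.card) * μ (Metric.ball c ε) := (mul_assoc _ _ _).symm
      _ = μ (Metric.ball c ε) := by
          rw [ENNReal.inv_mul_cancel hcard0 (ENNReal.natCast_ne_top _), one_mul]

lemma SBC.hit_zero {Ω : Type*} [MeasurableSpace Ω] (P : Measure Ω) [IsProbabilityMeasure P]
    {E : Type*} [MeasurableSpace E] (A : ℕ → Ω → E) (hmeas : ∀ i, Measurable (A i))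
    (hindep : iIndepFun A P)
    {S : Set E} (hS : MeasurableSet S) {p : ℝ≥0∞} (hp : 0 < p)
    (hple : ∀ i, p ≤ P (A i ⁻¹' S)) :
    P {ω | ∀ i, A i ω ∉ S} = 0 := by
  have hset : {ω | ∀ i, A i ω ∉ S} = ⋂ i, A i ⁻¹' Sᶜ := by
    ext ω; simp [Set.mem_iInter]
  rw [hset]
  have hbound : ∀ n : ℕ, P (⋂ i, A i ⁻¹' Sᶜ) ≤ (1 - p) ^ n := by
    intro n
    calc P (⋂ i, A i ⁻¹' Sᶜ) ≤ P (⋂ i ∈ Finset.range n, A i ⁻¹' Sᶜ) := by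
          apply measure_mono
          intro ω hω
          simp only [Set.mem_iInter] at hω ⊢
          exact fun i _ => hω i
      _ = ∏ i ∈ Finset.range n, P (A i ⁻¹' Sᶜ) :=
          hindep.measure_inter_preimage_eq_mul (Finset.range n)
            (sets := fun _ => Sᶜ) (fun _ _ => hS.compl)
      _ ≤ ∏ _i ∈ Finset.range n, (1 - p) := by
          apply Finset.prod_le_prod'
          intro i _
          have h1 : P (A i ⁻¹' Sᶜ) = 1 - P (A i ⁻¹' S) := by
            rw [Set.preimage_compl]
            exact prob_compl_eq_one_sub ((hmeas i) hS)
          rw [h1]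
          exact tsub_le_tsub_left (hple i) 1
      _ = (1 - p) ^ n := by rw [Finset.prod_const, Finset.card_range]
  have hlt : (1 : ℝ≥0∞) - p < 1 :=
    ENNReal.sub_lt_self ENNReal.one_ne_top one_ne_zero hp.ne'
  have htend := ENNReal.tendsto_pow_atTop_nhds_zero_of_lt_one hlt
  have := ge_of_tendsto' htend hbound
  exact le_antisymm this zero_le

lemma SBC.arccos_le_of_cos_le {ρ t : ℝ} (h0 : 0 ≤ ρ) (h1 : ρ ≤ π) (h : Real.cos ρ ≤ t) :
    Real.arccos t ≤ ρ := by
  have h2 := Real.arccos_cos h0 h1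
  have h3 := Real.monotone_arcsin h
  rw [Real.arccos_eq_pi_div_two_sub_arcsin] at h2 ⊢
  linarith

lemma SBC.nonempty_ne_zero {m : ℕ} (hm : 1 ≤ m) :
    Nonempty {x : EuclideanSpace ℝ (Fin m) // x ≠ 0} := by
  refine ⟨⟨EuclideanSpace.single (⟨0, by omega⟩ : Fin m) (1 : ℝ), fun h => ?_⟩⟩
  have := congrArg norm h
  rw [EuclideanSpace.norm_single] at this
  simp at this

lemma SBC.thetaA_nonneg {m : ℕ} (hm : 1 ≤ m) {n : ℕ} (hn : 1 ≤ n)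
    (a : Fin n → EuclideanSpace ℝ (Fin m)) : 0 ≤ thetaA a := by
  haveI := SBC.nonempty_ne_zero hm
  haveI : Nonempty (Fin n) := ⟨⟨0, by omega⟩⟩
  obtain ⟨x⟩ := SBC.nonempty_ne_zero hm
  have hbdd : BddAbove (Set.range fun x : {x : EuclideanSpace ℝ (Fin m) // x ≠ 0} =>
      ⨅ i, Real.arccos (⟪a i, (x : EuclideanSpace ℝ (Fin m))⟫ /
        ‖(x : EuclideanSpace ℝ (Fin m))‖)) := by
    refine ⟨π, ?_⟩
    rintro _ ⟨y, rfl⟩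
    refine (ciInf_le ⟨0, ?_⟩ (Classical.arbitrary (Fin n))).trans (Real.arccos_le_pi _)
    rintro _ ⟨i, rfl⟩
    exact Real.arccos_nonneg _
  refine le_trans ?_ (le_ciSup hbdd x)
  exact le_ciInf fun i => Real.arccos_nonneg _

lemma SBC.thetaA_le {m : ℕ} (hm : 1 ≤ m) {n : ℕ} (a : Fin n → EuclideanSpace ℝ (Fin m))
    (ha : ∀ i, ‖a i‖ = 1) {ρ : ℝ} (hρ0 : 0 < ρ) (hρπ : ρ ≤ π)
    (T : Finset (EuclideanSpace ℝ (Fin m)))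
    (hcov : Metric.sphere (0 : EuclideanSpace ℝ (Fin m)) 1 ⊆
      ⋃ c ∈ T, Metric.ball c (Real.sqrt (2 - 2 * Real.cos ρ) / 2))
    (hhit : ∀ c ∈ T, ∃ i : Fin n,
      a i ∈ Metric.ball c (Real.sqrt (2 - 2 * Real.cos ρ) / 2)) :
    thetaA a ≤ ρ := by
  haveI := SBC.nonempty_ne_zero hm
  apply ciSup_le
  rintro ⟨x, hx⟩
  set y : EuclideanSpace ℝ (Fin m) := ‖x‖⁻¹ • x with hy
  have hxn : ‖x‖ ≠ 0 := norm_ne_zero_iff.2 hx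
  have hyn : ‖y‖ = 1 := by
    rw [hy, norm_smul, norm_inv, norm_norm, inv_mul_cancel₀ hxn]
  obtain ⟨c, hcT, hyc⟩ := Set.mem_iUnion₂.1 (hcov (mem_sphere_zero_iff_norm.2 hyn))
  obtain ⟨i, hi⟩ := hhit c hcT
  have hd : dist (a i) y < Real.sqrt (2 - 2 * Real.cos ρ) := by
    calc dist (a i) y ≤ dist (a i) c + dist c y := dist_triangle _ _ _
      _ < Real.sqrt (2 - 2 * Real.cos ρ) / 2 + Real.sqrt (2 - 2 * Real.cos ρ) / 2 := by
          have := Metric.mem_ball.1 hi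
          have h2 := Metric.mem_ball.1 hyc
          rw [dist_comm] at h2
          linarith
      _ = Real.sqrt (2 - 2 * Real.cos ρ) := by ring
  have hnn : (0:ℝ) ≤ 2 - 2 * Real.cos ρ := by
    have := Real.cos_le_one ρ; linarith
  have hsq : ‖a i - y‖ ^ 2 < 2 - 2 * Real.cos ρ := by
    have h1 : ‖a i - y‖ = dist (a i) y := (dist_eq_norm _ _).symm
    have h2 : dist (a i) y ^ 2 < Real.sqrt (2 - 2 * Real.cos ρ) ^ 2 := by
      apply pow_lt_pow_left₀ hd dist_nonneg
      norm_num
    rwa [← h1, Real.sq_sqrt hnn] at h2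
  have hinner : Real.cos ρ < ⟪a i, y⟫ := by
    have := norm_sub_sq_real (a i) y
    rw [ha i, hyn] at this
    nlinarith [hsq]
  have hval : ⟪a i, x⟫ / ‖x‖ = ⟪a i, y⟫ := by
    rw [hy, real_inner_smul_right, div_eq_inv_mul]
  refine le_trans (ciInf_le ⟨0, ?_⟩ i) ?_
  · rintro _ ⟨j, rfl⟩; exact Real.arccos_nonneg _
  · rw [hval]
    exact SBC.arccos_le_of_cos_le hρ0.le hρπ hinner.le

/-! ### Main theorem -/

theorem stmt19 {Ω : Type*} [MeasurableSpace Ω] (P : Measure Ω) [IsProbabilityMeasure P]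
    {m : ℕ} (hm : 3 ≤ m)
    (A : ℕ → Ω → EuclideanSpace ℝ (Fin m))
    (hmeas : ∀ i, Measurable (A i))
    (hindep : iIndepFun A P)
    (hunif : ∀ i, IsUniformOnSphere (Measure.map (A i) P)) :
    P {ω | Tendsto (fun n : ℕ => condNum (fun i : Fin n => A i ω)) atTop (nhds 1)} = 1 := by
  classical
  have hm1 : 1 ≤ m := by omega
  -- the sequence of radii
  set ρ : ℕ → ℝ := fun j => π / (j + 1) with hρdef
  have hρ0 : ∀ j, 0 < ρ j := fun j => div_pos Real.pi_pos (by positivity)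
  have hρπ : ∀ j, ρ j ≤ π := fun j => by
    rw [hρdef]
    apply div_le_self Real.pi_pos.le
    push_cast; linarith [Nat.cast_nonneg (α := ℝ) j]
  set εf : ℕ → ℝ := fun j => Real.sqrt (2 - 2 * Real.cos (ρ j)) / 2 with hεdef
  have hcoslt : ∀ j, Real.cos (ρ j) < 1 := by
    intro j
    refine lt_of_le_of_ne (Real.cos_le_one _) fun h => ?_
    have h2π : ρ j < 2 * π := lt_of_le_of_lt (hρπ j) (by linarith [Real.pi_pos])
    have hn2π : -(2 * π) < ρ j := lt_trans (by linarith [Real.pi_pos]) (hρ0 j)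
    have := (Real.cos_eq_one_iff_of_lt_of_lt hn2π h2π).1 h
    exact (hρ0 j).ne' this
  have hε : ∀ j, 0 < εf j := by
    intro j
    have := hcoslt j
    have : (0:ℝ) < 2 - 2 * Real.cos (ρ j) := by linarith
    simp only [hεdef]
    positivity
  -- choose covers
  choose T hTcov hTnorm hTbound using fun j => SBC.cover_and_pos hm1 (hε j)
  -- bad events
  set badS : Set Ω := ⋃ i, A i ⁻¹' (Metric.sphere (0 : EuclideanSpace ℝ (Fin m)) 1)ᶜ with hbadSdef
  have hbadS : P badS = 0 := by
    apply measure_iUnion_null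
    intro i
    have : P (A i ⁻¹' (Metric.sphere (0 : EuclideanSpace ℝ (Fin m)) 1)ᶜ)
        = (Measure.map (A i) P) (Metric.sphere (0 : EuclideanSpace ℝ (Fin m)) 1)ᶜ := by
      rw [Measure.map_apply (hmeas i) (Metric.isClosed_sphere.measurableSet.compl)]
    rw [this]
    exact (hunif i).2.1
  set badB : Set Ω := ⋃ j : ℕ, ⋃ c ∈ T j, {ω | ∀ i, A i ω ∉ Metric.ball c (εf j)}
    with hbadBdef
  have hbadB : P badB = 0 := by
    apply measure_iUnion_null
    intro j
    refine le_antisymm (le_trans (measure_biUnion_finset_le _ _) (le_of_eq ?_)) zero_le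
    refine Finset.sum_eq_zero ?_
    intro c hc
    apply SBC.hit_zero P A hmeas hindep measurableSet_ball
      (p := ((T j).card : ℝ≥0∞)⁻¹)
    · exact ENNReal.inv_pos.2 (ENNReal.natCast_ne_top _)
    · intro i
      have : P (A i ⁻¹' Metric.ball c (εf j))
          = (Measure.map (A i) P) (Metric.ball c (εf j)) := by
        rw [Measure.map_apply (hmeas i) measurableSet_ball]
      rw [this]
      exact hTbound j (Measure.map (A i) P) (hunif i) c (hTnorm j c hc)
  -- good events suffice
  have hgood : (badS ∪ badB)ᶜ ⊆
      {ω | Tendsto (fun n : ℕ => condNum (fun i : Fin n => A i ω)) atTop (nhds 1)} := by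
    intro ω hω
    rw [Set.mem_compl_iff, Set.mem_union, not_or] at hω
    obtain ⟨hω1, hω2⟩ := hω
    have hsph : ∀ i, ‖A i ω‖ = 1 := by
      intro i
      by_contra h
      exact hω1 (Set.mem_iUnion.2 ⟨i, by simpa [mem_sphere_zero_iff_norm] using h⟩)
    have hhit : ∀ j, ∀ c ∈ T j, ∃ i, A i ω ∈ Metric.ball c (εf j) := by
      intro j c hc
      by_contra h
      push_neg at h
      exact hω2 (Set.mem_iUnion.2 ⟨j, Set.mem_iUnion₂.2 ⟨c, hc, fun i => h i⟩⟩)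
    -- theta tends to zero
    have hθ : Tendsto (fun n : ℕ => thetaA (fun i : Fin n => A i ω)) atTop (nhds 0) := by
      rw [Metric.tendsto_atTop]
      intro δ hδ
      obtain ⟨j, hj⟩ : ∃ j : ℕ, ρ j < δ := by
        obtain ⟨j, hj⟩ := exists_nat_gt (π / δ)
        refine ⟨j, ?_⟩
        rw [hρdef, div_lt_iff₀ (by positivity)]
        have : π / δ < (j : ℝ) + 1 := by linarith
        calc π = (π / δ) * δ := by field_simp
          _ < ((j : ℝ) + 1) * δ := by
              apply mul_lt_mul_of_pos_right this hδ
          _ = δ * ((j : ℝ) + 1) := by ring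
      obtain ⟨N, hN⟩ : ∃ N : ℕ, ∀ c ∈ T j, ∃ i < N, A i ω ∈ Metric.ball c (εf j) := by
        choose f hf using hhit j
        refine ⟨((T j).attach.sup fun c => f c.1 c.2) + 1, fun c hc => ⟨f c hc, ?_, hf c hc⟩⟩
        exact Nat.lt_succ_of_le (Finset.le_sup (f := fun c : {x // x ∈ T j} => f c.1 c.2) (Finset.mem_attach _ ⟨c, hc⟩))
      refine ⟨max N 1, fun n hn => ?_⟩
      have hn1 : 1 ≤ n := le_trans (le_max_right _ _) hn
      have hnN : N ≤ n := le_trans (le_max_left _ _) hn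
      have hle : thetaA (fun i : Fin n => A i ω) ≤ ρ j := by
        apply SBC.thetaA_le hm1 _ (fun i => hsph i) (hρ0 j) (hρπ j) (T j) (hTcov j)
        intro c hc
        obtain ⟨i, hiN, hib⟩ := hN c hc
        exact ⟨⟨i, lt_of_lt_of_le hiN hnN⟩, hib⟩
      have hge : 0 ≤ thetaA (fun i : Fin n => A i ω) :=
        SBC.thetaA_nonneg hm1 hn1 _
      rw [Real.dist_eq, sub_zero, abs_of_nonneg hge]
      exact lt_of_le_of_lt hle hj
    -- conclude via continuity
    have hcont : ContinuousAt (fun t : ℝ => |Real.cos t|⁻¹) 0 := by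
      apply ContinuousAt.inv₀
      · exact (Real.continuous_cos.abs).continuousAt
      · simp [Real.cos_zero]
    have := hcont.tendsto.comp hθ
    simp only [Real.cos_zero, abs_one, inv_one] at this
    simpa [condNum, Function.comp_def] using this
  -- measure bookkeeping
  have hbadm : P (badS ∪ badB) = 0 := measure_union_null hbadS hbadB
  have h1 : (1 : ℝ≥0∞) ≤
      P {ω | Tendsto (fun n : ℕ => condNum (fun i : Fin n => A i ω)) atTop (nhds 1)} := by
    calc (1 : ℝ≥0∞) = P Set.univ := (measure_univ).symm
      _ ≤ P ((badS ∪ badB)ᶜ) + P (badS ∪ badB) := by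
          have : (Set.univ : Set Ω) ⊆ (badS ∪ badB)ᶜ ∪ (badS ∪ badB) := by
            intro ω _
            by_cases h : ω ∈ badS ∪ badB
            · exact Or.inr h
            · exact Or.inl h
          exact le_trans (measure_mono this) (measure_union_le _ _)
      _ = P ((badS ∪ badB)ᶜ) := by rw [hbadm, add_zero]
      _ ≤ _ := measure_mono hgood
  exact le_antisymm prob_le_one h1
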